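/- arXiv:1012.0933 — 2 statements merged into one kernel-verified Lean document; each statement's English description precedes it below -/
import Mathlib

section
/- Let S = Sym(V) be a polynomial ring over a field k, I ⊆ S an ideal, and let x_1,…,x_{n+3} ∈ V be linearly independent and y_{ij} ∈ V (1 ≤ i < j ≤ n+3) arbitrary linear forms. Set x_{îĵ} equal to the wedge of x_1,…,x_{n+3} omitting x_i and x_j, and ω = Σ_{1≤i<j≤n+3} (−1)^{i+j} x_{îĵ} ⊗ y_{ij} ∈ Λ^{n+1}V ⊗ V. Then the image of the Koszul differential ∂(ω) in Λ^n V ⊗ (S/I)_2 is zero if and only if y_{ij}x_k − y_{ik}x_j + y_{jk}x_i ∈ I for all 1 ≤ i < j < k ≤ n+3. -/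
/-!
STATEMENT 16: Let `S` be a polynomial ring over a field `k`, `V = S₁`, `I ⊆ S` an
ideal, `x₁,…,x_{n+3} ∈ V` linearly independent and `y_{ij} ∈ V` (`i < j`) arbitrary.
For `ω = Σ_{i<j} (−1)^{i+j} x_{îĵ} ⊗ y_{ij} ∈ Λ^{n+1}V ⊗ V` (where `x_{îĵ}` is the
wedge of the `x`'s omitting `xᵢ` and `xⱼ`), the Koszul differential `∂(ω)` maps to
zero in `Λ^n V ⊗ (S/I)₂` if and only if
`y_{ij} x_l − y_{il} x_j + y_{jl} x_i ∈ I` for all `i < j < l`.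
-/

open MvPolynomial TensorProduct

set_option synthInstance.maxHeartbeats 1000000
set_option maxHeartbeats 1000000

noncomputable section

variable {k : Type*} [Field k] {σ : Type*}

/-- The space `V = S₁` of linear forms. -/
abbrev linForms (k : Type*) [Field k] (σ : Type*) : Submodule k (MvPolynomial σ k) :=
  homogeneousSubmodule σ k 1

/-- The Koszul differential of the decomposable element `v₁ ∧ ⋯ ∧ v_{m+1} ⊗ w` of
`Λ^{m+1}V ⊗ V`, viewed inside `ExteriorAlgebra k V ⊗ S`:
`∂(v₁ ∧ ⋯ ∧ v_{m+1} ⊗ w) = Σⱼ (−1)^{j−1} v₁ ∧ ⋯ v̂ⱼ ⋯ ∧ v_{m+1} ⊗ vⱼ·w`. -/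
def koszulOfDecomp (m : ℕ) (v : Fin (m + 1) → linForms k σ) (w : linForms k σ) :
    ExteriorAlgebra k (linForms k σ) ⊗[k] MvPolynomial σ k :=
  ∑ j : Fin (m + 1), ((-1 : ℤ) ^ (j : ℕ)) •
    ((ExteriorAlgebra.ιMulti k m (fun t => v (j.succAbove t)) :
        ExteriorAlgebra k (linForms k σ)) ⊗ₜ[k]
      ((v j : MvPolynomial σ k) * (w : MvPolynomial σ k)))

/-- The strictly monotone embedding `Fin (n+1) → Fin (n+3)` omitting `i` and `j`
(for `i < j`). -/
def omit2 {n : ℕ} (i j : Fin (n + 3)) (h : i < j) : Fin (n + 1) → Fin (n + 3) :=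
  fun t => j.succAbove ((Fin.castLT i
    (by have h1 : (i : ℕ) < (j : ℕ) := h; have h2 := j.isLt; omega)).succAbove t)

/-- The Koszul differential of `ω = Σ_{i<j} (−1)^{i+j} x_{îĵ} ⊗ y_{ij}`. -/
def koszulOfOmegaPf (n : ℕ) (x : Fin (n + 3) → linForms k σ)
    (y : Fin (n + 3) → Fin (n + 3) → linForms k σ) :
    ExteriorAlgebra k (linForms k σ) ⊗[k] MvPolynomial σ k :=
  ∑ i : Fin (n + 3), ∑ j : Fin (n + 3),
    if h : i < j then
      ((-1 : ℤ) ^ ((i : ℕ) + (j : ℕ))) •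
        koszulOfDecomp n (fun t => x (omit2 i j h t)) (y i j)
    else 0

set_option maxHeartbeats 4000000

section KoszulAux

namespace KAux

variable {n : ℕ}

lemma val_succAbove {m : ℕ} (p : Fin (m + 1)) (i : Fin m) :
    (p.succAbove i : ℕ) = if (i : ℕ) < (p : ℕ) then (i : ℕ) else (i : ℕ) + 1 := by
  rw [Fin.succAbove]
  split_ifs with h1 h2 h2 <;> simp_all [Fin.lt_def]

lemma val_omit2 (i j : Fin (n + 3)) (h : i < j) (t : Fin (n + 1)) :
    (omit2 i j h t : ℕ) =
      if (t : ℕ) < (i : ℕ) then (t : ℕ)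
      else if (t : ℕ) + 1 < (j : ℕ) then (t : ℕ) + 1 else (t : ℕ) + 2 := by
  have hij : (i : ℕ) < (j : ℕ) := h
  unfold omit2
  rw [val_succAbove, val_succAbove, Fin.coe_castLT]
  split_ifs <;> omega

lemma omit2_strictMono (i j : Fin (n + 3)) (h : i < j) : StrictMono (omit2 i j h) := by
  intro a b hab
  exact (Fin.strictMono_succAbove j) ((Fin.strictMono_succAbove _) hab)

lemma omit2_ne (i j : Fin (n + 3)) (h : i < j) (t : Fin (n + 1)) :
    omit2 i j h t ≠ i ∧ omit2 i j h t ≠ j := by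
  have hv := val_omit2 i j h t
  have hij : (i : ℕ) < (j : ℕ) := h
  constructor <;> intro he <;> rw [he] at hv <;> split_ifs at hv <;> omega

lemma val_add_count (i j : Fin (n + 3)) (h : i < j) (t : Fin (n + 1)) :
    (t : ℕ) + (if (i : ℕ) < (omit2 i j h t : ℕ) then 1 else 0)
      + (if (j : ℕ) < (omit2 i j h t : ℕ) then 1 else 0) = (omit2 i j h t : ℕ) := by
  have hv := val_omit2 i j h t
  have hij : (i : ℕ) < (j : ℕ) := h
  split_ifs at hv ⊢ <;> omega

def cOmit3 {n : ℕ} (i j l : Fin (n + 3)) : Fin n → Fin (n + 3) :=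
  if h : (Finset.univ \ {i, j, l} : Finset (Fin (n + 3))).card = n then
    ⇑((Finset.univ \ {i, j, l}).orderEmbOfFin h)
  else fun _ => ⟨0, by omega⟩

lemma card_compl3 {i j l : Fin (n + 3)} (hij : i ≠ j) (hil : i ≠ l) (hjl : j ≠ l) :
    (Finset.univ \ {i, j, l} : Finset (Fin (n + 3))).card = n := by
  rw [Finset.card_sdiff_of_subset (Finset.subset_univ _), Finset.card_univ, Fintype.card_fin,
    Finset.card_insert_of_notMem (by simp [hij, hil]),
    Finset.card_insert_of_notMem (by simp [hjl]), Finset.card_singleton]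
  omega

lemma cOmit3_eq_of_set_eq {i j l i' j' l' : Fin (n + 3)}
    (h : ({i, j, l} : Finset (Fin (n + 3))) = {i', j', l'}) :
    cOmit3 i j l = cOmit3 i' j' l' := by
  unfold cOmit3; rw [h]

lemma omit2_succAbove_eq (i j : Fin (n + 3)) (h : i < j) (t : Fin (n + 1)) :
    (fun s => omit2 i j h (t.succAbove s)) = cOmit3 i j (omit2 i j h t) := by
  have hne := omit2_ne i j h t
  have hcard : (Finset.univ \ {i, j, omit2 i j h t} : Finset (Fin (n + 3))).card = n :=
    card_compl3 h.ne (Ne.symm hne.1) (Ne.symm hne.2)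
  unfold cOmit3
  rw [dif_pos hcard]
  refine Finset.orderEmbOfFin_unique hcard (fun s => ?_)
    (fun a b hab => (omit2_strictMono i j h) ((Fin.strictMono_succAbove t) hab))
  simp only [Finset.mem_sdiff, Finset.mem_univ, Finset.mem_insert, Finset.mem_singleton,
    true_and]
  push_neg
  refine ⟨(omit2_ne i j h _).1, (omit2_ne i j h _).2, ?_⟩
  exact fun he => Fin.succAbove_ne t s ((omit2_strictMono i j h).injective he)

lemma image_omit2 (i j : Fin (n + 3)) (h : i < j) :
    Finset.image (omit2 i j h) Finset.univ = Finset.univ \ {i, j} := by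
  apply Finset.eq_of_subset_of_card_le
  · intro l hl
    simp only [Finset.mem_image, Finset.mem_univ, true_and] at hl
    obtain ⟨t, rfl⟩ := hl
    simp only [Finset.mem_sdiff, Finset.mem_univ, Finset.mem_insert, Finset.mem_singleton,
      true_and]
    push_neg
    exact omit2_ne i j h t
  · rw [Finset.card_sdiff_of_subset (Finset.subset_univ _), Finset.card_univ, Fintype.card_fin,
      Finset.card_insert_of_notMem (by simp [h.ne]), Finset.card_singleton,
      Finset.card_image_of_injective _ (omit2_strictMono i j h).injective,
      Finset.card_univ, Fintype.card_fin]
    omega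

lemma sorted_triple_eq {m : ℕ} {a b c i j l : Fin m} (h1 : a < b) (h2 : b < c)
    (h3 : i < j) (h4 : j < l) (h : ({a, b, c} : Finset (Fin m)) = {i, j, l}) :
    a = i ∧ b = j ∧ c = l := by
  have he := Finset.ext_iff.mp h
  simp only [Finset.mem_insert, Finset.mem_singleton] at he
  have ha := (he a).mp (Or.inl rfl)
  have hb := (he b).mp (Or.inr (Or.inl rfl))
  have hc := (he c).mp (Or.inr (Or.inr rfl))
  have hi := (he i).mpr (Or.inl rfl)
  have hj := (he j).mpr (Or.inr (Or.inl rfl))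
  have hl := (he l).mpr (Or.inr (Or.inr rfl))
  simp only [Fin.ext_iff] at ha hb hc hi hj hl ⊢
  have v1 : (a : ℕ) < b := h1
  have v2 : (b : ℕ) < c := h2
  have v3 : (i : ℕ) < j := h3
  have v4 : (j : ℕ) < l := h4
  omega



variable {n : ℕ}

def pfTerm (n : ℕ) (x : Fin (n + 3) → linForms k σ)
    (y : Fin (n + 3) → Fin (n + 3) → linForms k σ) (i j l : Fin (n + 3)) :
    ExteriorAlgebra k (linForms k σ) ⊗[k] MvPolynomial σ k :=
  if i < j ∧ l ≠ i ∧ l ≠ j then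
    ((-1 : ℤ) ^ ((i : ℕ) + (j : ℕ) + (l : ℕ) + (if (i : ℕ) < (l : ℕ) then 1 else 0)
        + (if (j : ℕ) < (l : ℕ) then 1 else 0))) •
      ((ExteriorAlgebra.ιMulti k n (fun s => x (cOmit3 i j l s)) :
          ExteriorAlgebra k (linForms k σ)) ⊗ₜ[k]
        ((x l : MvPolynomial σ k) * (y i j : MvPolynomial σ k)))
  else 0

variable (x : Fin (n + 3) → linForms k σ) (y : Fin (n + 3) → Fin (n + 3) → linForms k σ)

lemma pfTerm_omit2 (i j : Fin (n + 3)) (h : i < j) (t : Fin (n + 1)) :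
    pfTerm n x y i j (omit2 i j h t)
      = ((-1 : ℤ) ^ ((i : ℕ) + (j : ℕ))) • (((-1 : ℤ) ^ (t : ℕ)) •
          ((ExteriorAlgebra.ιMulti k n (fun s => x (omit2 i j h (t.succAbove s))) :
              ExteriorAlgebra k (linForms k σ)) ⊗ₜ[k]
            ((x (omit2 i j h t) : MvPolynomial σ k) * (y i j : MvPolynomial σ k)))) := by
  have hne := omit2_ne i j h t
  have hw : (fun s => x (cOmit3 i j (omit2 i j h t) s))
      = (fun s => x (omit2 i j h (t.succAbove s))) := by
    rw [← omit2_succAbove_eq i j h t]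
  rw [pfTerm, if_pos ⟨h, hne.1, hne.2⟩, hw, smul_smul, ← pow_add]
  have hc := val_add_count i j h t
  generalize (if (i : ℕ) < ((omit2 i j h t : Fin (n + 3)) : ℕ) then 1 else 0) = c1 at hc ⊢
  generalize (if (j : ℕ) < ((omit2 i j h t : Fin (n + 3)) : ℕ) then 1 else 0) = c2 at hc ⊢
  rw [show (i : ℕ) + (j : ℕ) + ((omit2 i j h t : Fin (n + 3)) : ℕ) + c1 + c2
      = ((i : ℕ) + (j : ℕ) + (t : ℕ)) + 2 * (c1 + c2) from by omega,
    pow_add, pow_mul, neg_one_sq, one_pow, mul_one]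

lemma inner_eq (i j : Fin (n + 3)) (h : i < j) :
    ((-1 : ℤ) ^ ((i : ℕ) + (j : ℕ))) • koszulOfDecomp n (fun t => x (omit2 i j h t)) (y i j)
      = ∑ l : Fin (n + 3), pfTerm n x y i j l := by
  rw [show (∑ l : Fin (n + 3), pfTerm n x y i j l)
      = ∑ l ∈ Finset.univ \ {i, j}, pfTerm n x y i j l from
    (Finset.sum_subset (Finset.subset_univ _) (fun l _ hl => by
      rw [pfTerm, if_neg]
      simp only [Finset.mem_sdiff, Finset.mem_univ, true_and, Finset.mem_insert,
        Finset.mem_singleton, not_not] at hl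
      tauto)).symm]
  rw [← image_omit2 i j h,
    Finset.sum_image (fun a _ b _ hab => (omit2_strictMono i j h).injective hab),
    koszulOfDecomp, Finset.smul_sum]
  exact Finset.sum_congr rfl fun t _ => (pfTerm_omit2 x y i j h t).symm

lemma koszul_eq_triple :
    koszulOfOmegaPf n x y = ∑ i, ∑ j, ∑ l, pfTerm n x y i j l := by
  rw [koszulOfOmegaPf]
  refine Finset.sum_congr rfl fun i _ => Finset.sum_congr rfl fun j _ => ?_
  by_cases h : i < j
  · rw [dif_pos h, inner_eq x y i j h]
  · rw [dif_neg h, eq_comm]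
    exact Finset.sum_eq_zero fun l _ => by rw [pfTerm, if_neg (fun hc => h hc.1)]

lemma pfTerm_region_split (i j l : Fin (n + 3)) :
    pfTerm n x y i j l =
      (if i < j ∧ j < l then pfTerm n x y i j l else 0) +
      (if i < l ∧ l < j then pfTerm n x y i j l else 0) +
      (if l < i ∧ i < j then pfTerm n x y i j l else 0) := by
  by_cases h : i < j ∧ l ≠ i ∧ l ≠ j
  · obtain ⟨hij, hli, hlj⟩ := h
    rcases lt_trichotomy l i with h1 | h1 | h1
    · rw [if_neg (fun hc => lt_irrefl l ((h1.trans hc.1).trans hc.2)),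
        if_neg (fun hc => lt_irrefl l (h1.trans hc.1)),
        if_pos ⟨h1, hij⟩, zero_add, zero_add]
    · exact absurd h1 hli
    · rcases lt_trichotomy l j with h2 | h2 | h2
      · rw [if_neg (fun hc => lt_irrefl l (h2.trans hc.2)),
          if_pos ⟨h1, h2⟩, if_neg (fun hc => lt_irrefl l (hc.1.trans h1)),
          zero_add, add_zero]
      · exact absurd h2 hlj
      · rw [if_pos ⟨hij, h2⟩, if_neg (fun hc => lt_irrefl l (hc.2.trans h2)),
          if_neg (fun hc => lt_irrefl l ((hc.1.trans hc.2).trans h2)),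
          add_zero, add_zero]
  · rw [pfTerm, if_neg h]
    simp

lemma reindexB :
    (∑ i : Fin (n + 3), ∑ j : Fin (n + 3), ∑ l : Fin (n + 3),
        (if i < l ∧ l < j then pfTerm n x y i j l else 0))
      = ∑ a : Fin (n + 3), ∑ b : Fin (n + 3), ∑ c : Fin (n + 3),
        (if a < b ∧ b < c then pfTerm n x y a c b else 0) :=
  Finset.sum_congr rfl fun _ _ => Finset.sum_comm

lemma reindexC :
    (∑ i : Fin (n + 3), ∑ j : Fin (n + 3), ∑ l : Fin (n + 3),
        (if l < i ∧ i < j then pfTerm n x y i j l else 0))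
      = ∑ a : Fin (n + 3), ∑ b : Fin (n + 3), ∑ c : Fin (n + 3),
        (if a < b ∧ b < c then pfTerm n x y b c a else 0) := by
  rw [show (∑ i : Fin (n + 3), ∑ j : Fin (n + 3), ∑ l : Fin (n + 3),
        (if l < i ∧ i < j then pfTerm n x y i j l else 0))
      = ∑ i : Fin (n + 3), ∑ l : Fin (n + 3), ∑ j : Fin (n + 3),
        (if l < i ∧ i < j then pfTerm n x y i j l else 0) from
    Finset.sum_congr rfl fun _ _ => Finset.sum_comm]
  exact Finset.sum_comm

lemma combine (a b c : Fin (n + 3)) (h : a < b ∧ b < c) :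
    pfTerm n x y a b c + pfTerm n x y a c b + pfTerm n x y b c a =
      ((-1 : ℤ) ^ ((a : ℕ) + (b : ℕ) + (c : ℕ))) •
        ((ExteriorAlgebra.ιMulti k n (fun s => x (cOmit3 a b c s)) :
            ExteriorAlgebra k (linForms k σ)) ⊗ₜ[k]
          ((x c : MvPolynomial σ k) * (y a b : MvPolynomial σ k)
            - (x b : MvPolynomial σ k) * (y a c : MvPolynomial σ k)
            + (x a : MvPolynomial σ k) * (y b c : MvPolynomial σ k))) := by
  obtain ⟨hab, hbc⟩ := h
  have hac : a < c := hab.trans hbc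
  have vab : (a : ℕ) < (b : ℕ) := hab
  have vbc : (b : ℕ) < (c : ℕ) := hbc
  have vac : (a : ℕ) < (c : ℕ) := hac
  have hs1 : cOmit3 (n := n) a c b = cOmit3 a b c :=
    cOmit3_eq_of_set_eq (by ext u; simp only [Finset.mem_insert, Finset.mem_singleton]; tauto)
  have hs2 : cOmit3 (n := n) b c a = cOmit3 a b c :=
    cOmit3_eq_of_set_eq (by ext u; simp only [Finset.mem_insert, Finset.mem_singleton]; tauto)
  have c1 : a < b ∧ c ≠ a ∧ c ≠ b := ⟨hab, hac.ne', hbc.ne'⟩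
  have c2 : a < c ∧ b ≠ a ∧ b ≠ c := ⟨hac, hab.ne', hbc.ne⟩
  have c3 : b < c ∧ a ≠ b ∧ a ≠ c := ⟨hbc, hab.ne, hac.ne⟩
  simp only [pfTerm]
  rw [if_pos c1, if_pos c2, if_pos c3]
  simp only [hs1, hs2]
  rw [if_pos vac, if_pos vbc, if_pos vab,
    if_neg (not_lt.mpr vbc.le), if_neg (not_lt.mpr vab.le), if_neg (not_lt.mpr vac.le)]
  rw [show (a : ℕ) + (c : ℕ) + (b : ℕ) + 1 + 0 = ((a : ℕ) + (b : ℕ) + (c : ℕ)) + 1 from by omega,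
    show (b : ℕ) + (c : ℕ) + (a : ℕ) + 0 + 0 = ((a : ℕ) + (b : ℕ) + (c : ℕ)) from by omega]
  simp only [pow_succ, mul_neg_one, neg_neg, neg_smul]
  rw [TensorProduct.tmul_add, TensorProduct.tmul_sub, smul_add, smul_sub]
  abel

lemma koszul_eq_pfSum :
    koszulOfOmegaPf n x y = ∑ a : Fin (n + 3), ∑ b : Fin (n + 3), ∑ c : Fin (n + 3),
      (if a < b ∧ b < c then
        ((-1 : ℤ) ^ ((a : ℕ) + (b : ℕ) + (c : ℕ))) •
          ((ExteriorAlgebra.ιMulti k n (fun s => x (cOmit3 a b c s)) :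
              ExteriorAlgebra k (linForms k σ)) ⊗ₜ[k]
            ((x c : MvPolynomial σ k) * (y a b : MvPolynomial σ k)
              - (x b : MvPolynomial σ k) * (y a c : MvPolynomial σ k)
              + (x a : MvPolynomial σ k) * (y b c : MvPolynomial σ k)))
      else 0) := by
  rw [koszul_eq_triple x y,
    show (∑ i, ∑ j, ∑ l, pfTerm n x y i j l)
      = ∑ i : Fin (n + 3), ∑ j : Fin (n + 3), ∑ l : Fin (n + 3),
        ((if i < j ∧ j < l then pfTerm n x y i j l else 0) +
         (if i < l ∧ l < j then pfTerm n x y i j l else 0) +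
         (if l < i ∧ i < j then pfTerm n x y i j l else 0)) from
      Finset.sum_congr rfl fun i _ => Finset.sum_congr rfl fun j _ =>
        Finset.sum_congr rfl fun l _ => pfTerm_region_split x y i j l]
  simp only [Finset.sum_add_distrib]
  rw [reindexB x y, reindexC x y]
  simp only [← Finset.sum_add_distrib]
  refine Finset.sum_congr rfl fun a _ => Finset.sum_congr rfl fun b _ =>
    Finset.sum_congr rfl fun c _ => ?_
  by_cases h : a < b ∧ b < c
  · simp only [if_pos h]
    exact combine x y a b c h
  · simp only [if_neg h, add_zero]



variable {n : ℕ}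

lemma exists_dual {x : Fin (n + 3) → linForms k σ} (hx : LinearIndependent k x) :
    ∃ f : Fin (n + 3) → (linForms k σ →ₗ[k] k),
      ∀ a b, f a (x b) = if b = a then 1 else 0 := by
  have hx' : LinearIndepOn k id (Set.range x) := (linearIndepOn_id_range_iff hx.injective).mpr hx
  let b := Module.Basis.extend hx'
  refine ⟨fun a => b.coord ⟨x a, hx'.subset_extend (Set.subset_univ _) ⟨a, rfl⟩⟩, fun a c => ?_⟩
  have hxc : x c = b ⟨x c, hx'.subset_extend (Set.subset_univ _) ⟨c, rfl⟩⟩ :=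
    (Module.Basis.extend_apply_self hx' ⟨x c, hx'.subset_extend (Set.subset_univ _) ⟨c, rfl⟩⟩).symm
  by_cases h : c = a
  · subst h
    rw [if_pos rfl, hxc, Module.Basis.coord_apply, Module.Basis.repr_self, Finsupp.single_eq_same]
  · rw [if_neg h, hxc, Module.Basis.coord_apply, Module.Basis.repr_self, Finsupp.single_eq_of_ne]
    exact fun he => h (hx.injective (congrArg Subtype.val he).symm)

lemma cOmit3_eq_emb {i j l : Fin (n + 3)} (hij : i ≠ j) (hil : i ≠ l) (hjl : j ≠ l) :
    cOmit3 i j l = ⇑((Finset.univ \ {i, j, l}).orderEmbOfFin (card_compl3 hij hil hjl)) := by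
  unfold cOmit3; rw [dif_pos (card_compl3 hij hil hjl)]

lemma cOmit3_injective {i j l : Fin (n + 3)} (hij : i ≠ j) (hil : i ≠ l) (hjl : j ≠ l) :
    Function.Injective (cOmit3 i j l) := by
  rw [cOmit3_eq_emb hij hil hjl]
  exact (Finset.orderEmbOfFin _ _).injective

lemma cOmit3_mem {i j l : Fin (n + 3)} (hij : i ≠ j) (hil : i ≠ l) (hjl : j ≠ l)
    (s : Fin n) : cOmit3 i j l s ∈ Finset.univ \ {i, j, l} := by
  rw [cOmit3_eq_emb hij hil hjl]
  exact Finset.orderEmbOfFin_mem _ _ _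

lemma cOmit3_surj {i j l : Fin (n + 3)} (hij : i ≠ j) (hil : i ≠ l) (hjl : j ≠ l)
    {u : Fin (n + 3)} (hu : u ∈ Finset.univ \ {i, j, l}) : ∃ q, cOmit3 i j l q = u := by
  rw [cOmit3_eq_emb hij hil hjl]
  have hr := Finset.range_orderEmbOfFin (Finset.univ \ {i, j, l}) (card_compl3 hij hil hjl)
  have : u ∈ Set.range ⇑((Finset.univ \ {i, j, l}).orderEmbOfFin (card_compl3 hij hil hjl)) := by
    rw [hr]; exact_mod_cast hu
  exact this

/-- the dual functional on the exterior algebra picking out the wedge complementary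
to the sorted triple `(i,j,l)`. -/
def lamT (f : Fin (n + 3) → (linForms k σ →ₗ[k] k)) (i j l : Fin (n + 3)) :
    ExteriorAlgebra k (linForms k σ) →ₗ[k] k :=
  ExteriorAlgebra.liftAlternating
    (Function.update (fun _ => 0) n
      ((Matrix.detRowAlternating (R := k) (n := Fin n)).compLinearMap
        (LinearMap.pi (fun p => f (cOmit3 i j l p)))))

lemma lamT_wedge {x : Fin (n + 3) → linForms k σ}
    (f : Fin (n + 3) → (linForms k σ →ₗ[k] k))
    (hf : ∀ a b, f a (x b) = if b = a then 1 else 0)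
    {i j l a b c : Fin (n + 3)} (h3 : i < j) (h4 : j < l) (h1 : a < b) (h2 : b < c) :
    lamT f i j l (ExteriorAlgebra.ιMulti k n (fun s => x (cOmit3 a b c s)))
      = if a = i ∧ b = j ∧ c = l then 1 else 0 := by
  have hij : i ≠ j := h3.ne
  have hil : i ≠ l := (h3.trans h4).ne
  have hjl : j ≠ l := h4.ne
  have hab : a ≠ b := h1.ne
  have hac : a ≠ c := (h1.trans h2).ne
  have hbc : b ≠ c := h2.ne
  rw [lamT, ExteriorAlgebra.liftAlternating_apply_ιMulti, Function.update_self,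
    AlternatingMap.compLinearMap_apply]
  have hdet : (Matrix.detRowAlternating (R := k) (n := Fin n))
      (fun q => (LinearMap.pi (fun p => f (cOmit3 i j l p))) (x (cOmit3 a b c q)))
      = Matrix.det (Matrix.of fun q p => f (cOmit3 i j l p) (x (cOmit3 a b c q))) := rfl
  rw [hdet]
  by_cases hset : ({a, b, c} : Finset (Fin (n + 3))) = {i, j, l}
  · obtain ⟨rfl, rfl, rfl⟩ := sorted_triple_eq h1 h2 h3 h4 hset
    rw [if_pos ⟨rfl, rfl, rfl⟩]
    have hone : (Matrix.of fun q p => f (cOmit3 a b c p) (x (cOmit3 a b c q)))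
        = (1 : Matrix (Fin n) (Fin n) k) := by
      ext q p
      rw [Matrix.of_apply, hf, Matrix.one_apply]
      by_cases hqp : q = p
      · subst hqp; rw [if_pos rfl, if_pos rfl]
      · rw [if_neg (fun he => hqp ((cOmit3_injective hab hac hbc) he)), if_neg hqp]
    rw [hone, Matrix.det_one]
  · rw [if_neg (fun hc => hset (by rw [hc.1, hc.2.1, hc.2.2]))]
    have hC : (Finset.univ \ {a, b, c} : Finset (Fin (n + 3))) ≠ Finset.univ \ {i, j, l} := by
      intro hE
      apply hset
      have h2' := congrArg (Finset.univ \ ·) hE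
      simpa only [Finset.sdiff_sdiff_self_left, Finset.univ_inter] using h2'
    have hns : ¬ (Finset.univ \ {a, b, c} : Finset (Fin (n + 3))) ⊆ Finset.univ \ {i, j, l} := by
      intro hsub
      exact hC (Finset.eq_of_subset_of_card_le hsub
        (le_of_eq ((card_compl3 hij hil hjl).trans (card_compl3 hab hac hbc).symm)))
    obtain ⟨u, huC1, huC0⟩ := Finset.not_subset.mp hns
    obtain ⟨q0, hq0⟩ := cOmit3_surj hab hac hbc huC1
    refine Matrix.det_eq_zero_of_row_eq_zero q0 (fun p => ?_)
    rw [Matrix.of_apply, hq0, hf, if_neg]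
    intro he
    exact huC0 (he ▸ cOmit3_mem hij hil hjl p)

end KAux

end KoszulAux

open KAux in
theorem koszul_cycle_iff_pfaffian_relations (n : ℕ) (I : Ideal (MvPolynomial σ k))
    (x : Fin (n + 3) → linForms k σ) (y : Fin (n + 3) → Fin (n + 3) → linForms k σ)
    (hx : LinearIndependent k x) :
    (TensorProduct.map (LinearMap.id)
        (Submodule.mkQ (Submodule.restrictScalars k (I : Submodule (MvPolynomial σ k)
          (MvPolynomial σ k))))) (koszulOfOmegaPf n x y) = 0 ↔
      ∀ i j l : Fin (n + 3), i < j → j < l →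
        (y i j : MvPolynomial σ k) * (x l : MvPolynomial σ k) -
          (y i l : MvPolynomial σ k) * (x j : MvPolynomial σ k) +
          (y j l : MvPolynomial σ k) * (x i : MvPolynomial σ k) ∈ I := by

  classical
  set pR : Submodule k (MvPolynomial σ k) :=
    Submodule.restrictScalars k (I : Submodule (MvPolynomial σ k) (MvPolynomial σ k)) with hpR
  have hE : (TensorProduct.map (LinearMap.id) (Submodule.mkQ pR)) (koszulOfOmegaPf n x y)
      = ∑ a : Fin (n + 3), ∑ b : Fin (n + 3), ∑ c : Fin (n + 3),
        (if a < b ∧ b < c then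
          ((-1 : ℤ) ^ ((a : ℕ) + (b : ℕ) + (c : ℕ))) •
            ((ExteriorAlgebra.ιMulti k n (fun s => x (cOmit3 a b c s)) :
                ExteriorAlgebra k (linForms k σ)) ⊗ₜ[k]
              (Submodule.Quotient.mk (p := pR)
                ((x c : MvPolynomial σ k) * (y a b : MvPolynomial σ k)
                  - (x b : MvPolynomial σ k) * (y a c : MvPolynomial σ k)
                  + (x a : MvPolynomial σ k) * (y b c : MvPolynomial σ k))))
        else 0) := by
    rw [koszul_eq_pfSum x y, map_sum]
    refine Finset.sum_congr rfl fun a _ => ?_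
    rw [map_sum]
    refine Finset.sum_congr rfl fun b _ => ?_
    rw [map_sum]
    refine Finset.sum_congr rfl fun c _ => ?_
    by_cases h : a < b ∧ b < c
    · rw [if_pos h, if_pos h, map_zsmul, TensorProduct.map_tmul]
      simp only [LinearMap.id_coe, id_eq, Submodule.mkQ_apply]
    · rw [if_neg h, if_neg h, map_zero]
  rw [hE]
  constructor
  · intro h0 i j l hij hjl
    obtain ⟨f, hf⟩ := exists_dual hx
    set lam := lamT f i j l with hlam
    set Φ : (ExteriorAlgebra k (linForms k σ) ⊗[k] (MvPolynomial σ k ⧸ pR)) →ₗ[k]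
        (MvPolynomial σ k ⧸ pR) :=
      (TensorProduct.lid k (MvPolynomial σ k ⧸ pR)).toLinearMap.comp
        (LinearMap.rTensor (MvPolynomial σ k ⧸ pR) lam) with hPhi
    have h1 : Φ (∑ a : Fin (n + 3), ∑ b : Fin (n + 3), ∑ c : Fin (n + 3),
        (if a < b ∧ b < c then
          ((-1 : ℤ) ^ ((a : ℕ) + (b : ℕ) + (c : ℕ))) •
            ((ExteriorAlgebra.ιMulti k n (fun s => x (cOmit3 a b c s)) :
                ExteriorAlgebra k (linForms k σ)) ⊗ₜ[k]
              (Submodule.Quotient.mk (p := pR)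
                ((x c : MvPolynomial σ k) * (y a b : MvPolynomial σ k)
                  - (x b : MvPolynomial σ k) * (y a c : MvPolynomial σ k)
                  + (x a : MvPolynomial σ k) * (y b c : MvPolynomial σ k))))
        else 0)) = 0 := by rw [h0, map_zero]
    have h2 : ∀ a b c : Fin (n + 3),
        Φ (if a < b ∧ b < c then
          ((-1 : ℤ) ^ ((a : ℕ) + (b : ℕ) + (c : ℕ))) •
            ((ExteriorAlgebra.ιMulti k n (fun s => x (cOmit3 a b c s)) :
                ExteriorAlgebra k (linForms k σ)) ⊗ₜ[k]
              (Submodule.Quotient.mk (p := pR)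
                ((x c : MvPolynomial σ k) * (y a b : MvPolynomial σ k)
                  - (x b : MvPolynomial σ k) * (y a c : MvPolynomial σ k)
                  + (x a : MvPolynomial σ k) * (y b c : MvPolynomial σ k))))
        else 0)
        = (if a < b ∧ b < c then
          ((-1 : ℤ) ^ ((a : ℕ) + (b : ℕ) + (c : ℕ))) •
            ((if a = i ∧ b = j ∧ c = l then (1 : k) else 0) •
              (Submodule.Quotient.mk (p := pR)
                ((x c : MvPolynomial σ k) * (y a b : MvPolynomial σ k)
                  - (x b : MvPolynomial σ k) * (y a c : MvPolynomial σ k)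
                  + (x a : MvPolynomial σ k) * (y b c : MvPolynomial σ k))))
        else 0) := by
      intro a b c
      by_cases h : a < b ∧ b < c
      · rw [if_pos h, if_pos h, map_zsmul, hPhi, LinearMap.comp_apply,
          LinearMap.rTensor_tmul, LinearEquiv.coe_coe, TensorProduct.lid_tmul, hlam,
          lamT_wedge f hf hij hjl h.1 h.2]
      · rw [if_neg h, if_neg h, map_zero]
    rw [map_sum] at h1
    simp only [map_sum, h2] at h1
    have hz1 : ∀ a ∈ (Finset.univ : Finset (Fin (n + 3))), a ≠ i →
        (∑ b : Fin (n + 3), ∑ c : Fin (n + 3),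
          (if a < b ∧ b < c then
            ((-1 : ℤ) ^ ((a : ℕ) + (b : ℕ) + (c : ℕ))) •
              ((if a = i ∧ b = j ∧ c = l then (1 : k) else 0) •
                (Submodule.Quotient.mk (p := pR)
                  ((x c : MvPolynomial σ k) * (y a b : MvPolynomial σ k)
                    - (x b : MvPolynomial σ k) * (y a c : MvPolynomial σ k)
                    + (x a : MvPolynomial σ k) * (y b c : MvPolynomial σ k))))
          else 0)) = 0 := by
      intro a _ ha
      refine Finset.sum_eq_zero fun b _ => Finset.sum_eq_zero fun c _ => ?_
      simp [ha]
    have h3 := (Finset.sum_eq_single_of_mem i (Finset.mem_univ i) hz1).symm.trans h1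
    have hz2 : ∀ b ∈ (Finset.univ : Finset (Fin (n + 3))), b ≠ j →
        (∑ c : Fin (n + 3),
          (if i < b ∧ b < c then
            ((-1 : ℤ) ^ ((i : ℕ) + (b : ℕ) + (c : ℕ))) •
              ((if i = i ∧ b = j ∧ c = l then (1 : k) else 0) •
                (Submodule.Quotient.mk (p := pR)
                  ((x c : MvPolynomial σ k) * (y i b : MvPolynomial σ k)
                    - (x b : MvPolynomial σ k) * (y i c : MvPolynomial σ k)
                    + (x i : MvPolynomial σ k) * (y b c : MvPolynomial σ k))))
          else 0)) = 0 := by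
      intro b _ hb
      refine Finset.sum_eq_zero fun c _ => ?_
      simp [hb]
    have h4 := (Finset.sum_eq_single_of_mem j (Finset.mem_univ j) hz2).symm.trans h3
    have hz3 : ∀ c ∈ (Finset.univ : Finset (Fin (n + 3))), c ≠ l →
        ((if i < j ∧ j < c then
            ((-1 : ℤ) ^ ((i : ℕ) + (j : ℕ) + (c : ℕ))) •
              ((if i = i ∧ j = j ∧ c = l then (1 : k) else 0) •
                (Submodule.Quotient.mk (p := pR)
                  ((x c : MvPolynomial σ k) * (y i j : MvPolynomial σ k)
                    - (x j : MvPolynomial σ k) * (y i c : MvPolynomial σ k)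
                    + (x i : MvPolynomial σ k) * (y j c : MvPolynomial σ k))))
          else 0)) = 0 := by
      intro c _ hc
      simp [hc]
    have h5 := (Finset.sum_eq_single_of_mem l (Finset.mem_univ l) hz3).symm.trans h4
    rw [if_pos ⟨hij, hjl⟩, if_pos ⟨rfl, rfl, rfl⟩, one_smul] at h5
    have h6 : ((-1 : ℤ) ^ ((i : ℕ) + (j : ℕ) + (l : ℕ))
        * (-1 : ℤ) ^ ((i : ℕ) + (j : ℕ) + (l : ℕ))) •
        (Submodule.Quotient.mk (p := pR)
          ((x l : MvPolynomial σ k) * (y i j : MvPolynomial σ k)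
            - (x j : MvPolynomial σ k) * (y i l : MvPolynomial σ k)
            + (x i : MvPolynomial σ k) * (y j l : MvPolynomial σ k))) = 0 := by
      rw [mul_smul, h5, smul_zero]
    rw [← pow_add, Even.neg_one_pow ⟨(i : ℕ) + (j : ℕ) + (l : ℕ), rfl⟩, one_smul] at h6
    have h7 := (Submodule.Quotient.mk_eq_zero pR).mp h6
    rw [Submodule.restrictScalars_mem] at h7
    rw [show (y i j : MvPolynomial σ k) * (x l : MvPolynomial σ k) -
          (y i l : MvPolynomial σ k) * (x j : MvPolynomial σ k) +
          (y j l : MvPolynomial σ k) * (x i : MvPolynomial σ k)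
        = (x l : MvPolynomial σ k) * (y i j : MvPolynomial σ k)
            - (x j : MvPolynomial σ k) * (y i l : MvPolynomial σ k)
            + (x i : MvPolynomial σ k) * (y j l : MvPolynomial σ k) from by ring]
    exact h7
  · intro hrel
    refine Finset.sum_eq_zero fun a _ => Finset.sum_eq_zero fun b _ =>
      Finset.sum_eq_zero fun c _ => ?_
    by_cases h : a < b ∧ b < c
    · rw [if_pos h]
      have hq : ((x c : MvPolynomial σ k) * (y a b : MvPolynomial σ k)
          - (x b : MvPolynomial σ k) * (y a c : MvPolynomial σ k)
          + (x a : MvPolynomial σ k) * (y b c : MvPolynomial σ k)) ∈ I := by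
        rw [show (x c : MvPolynomial σ k) * (y a b : MvPolynomial σ k)
            - (x b : MvPolynomial σ k) * (y a c : MvPolynomial σ k)
            + (x a : MvPolynomial σ k) * (y b c : MvPolynomial σ k)
          = (y a b : MvPolynomial σ k) * (x c : MvPolynomial σ k) -
              (y a c : MvPolynomial σ k) * (x b : MvPolynomial σ k) +
              (y b c : MvPolynomial σ k) * (x a : MvPolynomial σ k) from by ring]
        exact hrel a b c h.1 h.2
      have hq0 : (Submodule.Quotient.mk (p := pR)
          ((x c : MvPolynomial σ k) * (y a b : MvPolynomial σ k)
            - (x b : MvPolynomial σ k) * (y a c : MvPolynomial σ k)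
            + (x a : MvPolynomial σ k) * (y b c : MvPolynomial σ k))) = 0 :=
        (Submodule.Quotient.mk_eq_zero pR).mpr (by rw [Submodule.restrictScalars_mem]; exact hq)
      rw [hq0, TensorProduct.tmul_zero, smul_zero]
    · rw [if_neg h]

end
end

section
/- Let S be a polynomial ring over a field k and I ⊆ S a semigroup (toric) ideal containing no linear form. Suppose y_{12}x_3 − y_{13}x_2 + y_{23}x_1 ∈ I, where x_1, x_2, x_3 are distinct variables of S and y_{12}, y_{13}, y_{23} are (possibly zero) variables of S distinct from x_1, x_2, x_3. Then at least one of y_{12}, y_{13}, y_{23} is zero. -/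
/-!
STATEMENT 17: If `I` is a semigroup (toric) ideal of a polynomial ring containing no
linear form, and `y₁₂ x₃ − y₁₃ x₂ + y₂₃ x₁ ∈ I` where `x₁, x₂, x₃` are distinct
variables and each `y_{ij}` is either zero or a variable distinct from `x₁, x₂, x₃`,
then at least one of `y₁₂, y₁₃, y₂₃` is zero.
-/

open MvPolynomial

/-- A (semigroup, toric) ideal: the kernel of a `k`-algebra homomorphism from the
polynomial ring to a Laurent polynomial ring sending each variable to a monomial. -/
def IsToricIdeal {k : Type*} [Field k] {σ : Type*} (I : Ideal (MvPolynomial σ k)) : Prop :=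
  ∃ (p : ℕ) (m : σ → (Fin p →₀ ℤ)),
    I = RingHom.ker (MvPolynomial.aeval
      (fun i => (AddMonoidAlgebra.single (m i) 1 : AddMonoidAlgebra k (Fin p →₀ ℤ)))).toRingHom

theorem toric_pfaffian_relation_forces_zero {k : Type*} [Field k] {σ : Type*}
    (I : Ideal (MvPolynomial σ k)) (htoric : IsToricIdeal I)
    (hnolin : ∀ f ∈ I, f.IsHomogeneous 1 → f = 0)
    (a b c : σ) (hab : a ≠ b) (hac : a ≠ c) (hbc : b ≠ c)
    (y12 y13 y23 : MvPolynomial σ k)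
    (h12 : y12 = 0 ∨ ∃ u : σ, u ≠ a ∧ u ≠ b ∧ u ≠ c ∧ y12 = X u)
    (h13 : y13 = 0 ∨ ∃ u : σ, u ≠ a ∧ u ≠ b ∧ u ≠ c ∧ y13 = X u)
    (h23 : y23 = 0 ∨ ∃ u : σ, u ≠ a ∧ u ≠ b ∧ u ≠ c ∧ y23 = X u)
    (hmem : y12 * X c - y13 * X b + y23 * X a ∈ I) :
    y12 = 0 ∨ y13 = 0 ∨ y23 = 0 := by
  by_contra hcon
  push_neg at hcon
  obtain ⟨h12n, h13n, h23n⟩ := hcon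
  obtain ⟨u, hua, hub, huc, hu⟩ := h12.resolve_left h12n
  obtain ⟨v, hva, hvb, hvc, hv⟩ := h13.resolve_left h13n
  obtain ⟨w, hwa, hwb, hwc, hw⟩ := h23.resolve_left h23n
  obtain ⟨p, m, hI⟩ := htoric
  subst hu hv hw hI
  simp only [RingHom.mem_ker, AlgHom.toRingHom_eq_coe, RingHom.coe_coe] at hmem
  rw [map_add, map_sub, map_mul, map_mul, map_mul] at hmem
  simp only [aeval_X] at hmem
  rw [AddMonoidAlgebra.single_mul_single, AddMonoidAlgebra.single_mul_single,
    AddMonoidAlgebra.single_mul_single, mul_one] at hmem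
  set P := m u + m c with hP
  set Q := m v + m b with hQ
  set R := m w + m a with hR
  have hmem' : (Finsupp.single P (1:k)) - Finsupp.single Q 1 + Finsupp.single R 1 = 0 := by
    have := congrArg AddMonoidAlgebra.coeff hmem
    simpa [AddMonoidAlgebra.coeff_add, AddMonoidAlgebra.coeff_sub, AddMonoidAlgebra.coeff_single] using this
  have hq := DFunLike.congr_fun hmem' Q
  have hp := DFunLike.congr_fun hmem' P
  have hr := DFunLike.congr_fun hmem' R
  simp only [Finsupp.add_apply, Finsupp.sub_apply, Finsupp.coe_zero, Pi.zero_apply,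
    Finsupp.single_apply] at hq hp hr
  clear_value P Q R
  clear hP hQ hR hmem hmem' hnolin h12 h13 h23
  by_cases h1 : P = Q <;> by_cases h2 : R = Q <;>
      simp_all [h1, h2, eq_comm] <;>
    first
      | exact one_ne_zero hq
      | exact one_ne_zero hp
      | exact one_ne_zero hr
end
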